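/- Let z₁, …, z_N ∈ ℝ, w₁, …, w_N ≥ 0, fix μ ∈ ℝ, λ ∈ ℝ and ℓ > 0, and let k(z, σ) = (2/σ) φ((z−μ)/σ) Φ(λ(z−μ)/σ). Let Ĝ be a probability measure on (0,∞) with support in [ℓ, ∞), and define D_Ĝ(σ) = Σ_{i=1}^N w_i · k(z_i, σ)/∫ k(z_i, s) dĜ(s) − Σ_{i=1}^N w_i. If D_Ĝ(σ) ≤ 0 for every σ ≥ ℓ, then Ĝ is a global maximizer of ℓ̃ over all probability measures with support in [ℓ, ∞): ℓ̃(G) ≤ ℓ̃(Ĝ) for every such G, where ℓ̃(G) = Σ_{i=1}^N w_i log ∫ k(z_i, σ) dG(σ). -/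

import Mathlib

open MeasureTheory Filter

/-- Standard normal density. -/
noncomputable def stdPhi (z : ℝ) : ℝ := Real.exp (-(z ^ 2) / 2) / Real.sqrt (2 * Real.pi)

/-- Standard normal cumulative distribution function. -/
noncomputable def stdPhiCDF (z : ℝ) : ℝ := ∫ t in Set.Iic z, stdPhi t

/-- Skew-normal kernel `k(z, σ)` with fixed location `μ` and shape `lam`. -/
noncomputable def snKer (μ lam z σ : ℝ) : ℝ :=
  (2 / σ) * stdPhi ((z - μ) / σ) * stdPhiCDF (lam * ((z - μ) / σ))

lemma stdPhi_pos (z : ℝ) : 0 < stdPhi z := by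
  unfold stdPhi
  have : 0 < Real.sqrt (2 * Real.pi) := Real.sqrt_pos.mpr (by positivity)
  positivity

lemma stdPhi_integrable : Integrable stdPhi := by
  have h : Integrable (fun x : ℝ => Real.exp (-(1/2 : ℝ) * x ^ 2)) :=
    integrable_exp_neg_mul_sq (by norm_num)
  have h2 := h.div_const (Real.sqrt (2 * Real.pi))
  convert h2 using 2 with x
  unfold stdPhi
  ring_nf

lemma stdPhi_le (z : ℝ) : stdPhi z ≤ stdPhi 0 := by
  unfold stdPhi
  have h0 : 0 < Real.sqrt (2 * Real.pi) := Real.sqrt_pos.mpr (by positivity)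
  have h : Real.exp (-(z ^ 2) / 2) ≤ Real.exp (-(0 ^ 2) / 2) :=
    Real.exp_le_exp.mpr (by nlinarith [sq_nonneg z])
  exact div_le_div_of_nonneg_right h h0.le

lemma stdPhiCDF_pos (z : ℝ) : 0 < stdPhiCDF z := by
  unfold stdPhiCDF
  rw [setIntegral_pos_iff_support_of_nonneg_ae
    (Filter.Eventually.of_forall fun t => (stdPhi_pos t).le)
    stdPhi_integrable.integrableOn]
  have : Function.support stdPhi = Set.univ := by
    ext t; simp [Function.support, (stdPhi_pos t).ne']
  rw [this, Set.univ_inter, Real.volume_Iic]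
  simp

lemma stdPhiCDF_nonneg (z : ℝ) : 0 ≤ stdPhiCDF z := (stdPhiCDF_pos z).le

lemma stdPhiCDF_mono : Monotone stdPhiCDF := by
  intro a b hab
  exact setIntegral_mono_set stdPhi_integrable.integrableOn
    (Filter.Eventually.of_forall fun t => (stdPhi_pos t).le)
    (HasSubset.Subset.eventuallyLE (Set.Iic_subset_Iic.mpr hab))

lemma stdPhiCDF_le (z : ℝ) : stdPhiCDF z ≤ ∫ t, stdPhi t :=
  setIntegral_le_integral stdPhi_integrable
    (Filter.Eventually.of_forall fun t => (stdPhi_pos t).le)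

lemma stdPhi_continuous : Continuous stdPhi := by
  unfold stdPhi
  fun_prop

lemma snKer_measurable (μ lam z : ℝ) : Measurable (fun σ => snKer μ lam z σ) := by
  unfold snKer
  have h1 : Measurable fun σ : ℝ => (z - μ) / σ := by
    exact measurable_const.div measurable_id
  exact ((measurable_const.div measurable_id).mul
      (stdPhi_continuous.measurable.comp h1)).mul
    (stdPhiCDF_mono.measurable.comp (measurable_const.mul h1))

lemma snKer_pos (μ lam z σ : ℝ) (hσ : 0 < σ) : 0 < snKer μ lam z σ := by
  unfold snKer
  have := stdPhi_pos ((z - μ) / σ)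
  have := stdPhiCDF_pos (lam * ((z - μ) / σ))
  positivity

lemma snKer_le (μ lam z ℓ σ : ℝ) (hℓ : 0 < ℓ) (hσ : ℓ ≤ σ) :
    snKer μ lam z σ ≤ (2 / ℓ) * stdPhi 0 * (∫ t, stdPhi t) := by
  unfold snKer
  have hσ0 : 0 < σ := lt_of_lt_of_le hℓ hσ
  have h1 : (2 : ℝ) / σ ≤ 2 / ℓ := by gcongr
  have h2 : (2 : ℝ) / σ * stdPhi ((z - μ) / σ) ≤ 2 / ℓ * stdPhi 0 :=
    mul_le_mul h1 (stdPhi_le _) (stdPhi_pos _).le (by positivity)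
  have h3 : 0 ≤ (2 : ℝ) / ℓ * stdPhi 0 := by have := stdPhi_pos 0; positivity
  exact mul_le_mul h2 (stdPhiCDF_le _) (stdPhiCDF_nonneg _) h3

/-- Weighted mixture log-likelihood `ℓ̃(G) = Σᵢ wᵢ log ∫ k(zᵢ, σ) dG(σ)`. -/
noncomputable def ltilde {N : ℕ} (w z : Fin N → ℝ) (μ lam : ℝ) (G : Measure ℝ) : ℝ :=
  ∑ i, w i * Real.log (∫ σ, snKer μ lam (z i) σ ∂G)

lemma ae_le_of_Iio_null {ℓ : ℝ} (ν : Measure ℝ) (hν : ν (Set.Iio ℓ) = 0) :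
    ∀ᵐ σ ∂ν, ℓ ≤ σ := by
  rw [ae_iff]
  convert hν using 2
  ext σ; simp [not_le]

lemma snKer_integrable (μ lam zi ℓ : ℝ) (hℓ : 0 < ℓ) (ν : Measure ℝ)
    [IsProbabilityMeasure ν] (hνs : ν (Set.Iio ℓ) = 0) :
    Integrable (fun σ => snKer μ lam zi σ) ν := by
  refine Integrable.mono' (integrable_const ((2 / ℓ) * stdPhi 0 * (∫ t, stdPhi t)))
    (snKer_measurable μ lam zi).aestronglyMeasurable ?_
  filter_upwards [ae_le_of_Iio_null ν hνs] with σ hσ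
  rw [Real.norm_eq_abs, abs_of_pos (snKer_pos _ _ _ _ (lt_of_lt_of_le hℓ hσ))]
  exact snKer_le μ lam zi ℓ σ hℓ hσ

lemma snKer_integral_pos (μ lam zi ℓ : ℝ) (hℓ : 0 < ℓ) (ν : Measure ℝ)
    [IsProbabilityMeasure ν] (hνs : ν (Set.Iio ℓ) = 0) :
    0 < ∫ σ, snKer μ lam zi σ ∂ν := by
  have hnn : 0 ≤ᵐ[ν] fun σ => snKer μ lam zi σ := by
    filter_upwards [ae_le_of_Iio_null ν hνs] with σ hσ
    exact (snKer_pos _ _ _ _ (lt_of_lt_of_le hℓ hσ)).le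
  rw [integral_pos_iff_support_of_nonneg_ae hnn (snKer_integrable μ lam zi ℓ hℓ ν hνs)]
  have hIci : ν (Set.Ici ℓ) = 1 := by
    rw [← Set.compl_Iio, measure_compl measurableSet_Iio (measure_ne_top ν _), hνs,
      measure_univ]
    simp
  have hsub : Set.Ici ℓ ⊆ Function.support fun σ => snKer μ lam zi σ := fun σ hσ =>
    (snKer_pos μ lam zi σ (lt_of_lt_of_le hℓ hσ)).ne'
  calc (0 : ENNReal) < 1 := by norm_num
    _ = ν (Set.Ici ℓ) := hIci.symm
    _ ≤ ν (Function.support fun σ => snKer μ lam zi σ) := measure_mono hsub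

theorem stmt15 (N : ℕ) (z w : Fin N → ℝ) (hw : ∀ i, 0 ≤ w i)
    (μ lam ℓ : ℝ) (hℓ : 0 < ℓ)
    (Ghat : Measure ℝ) (hGhat : IsProbabilityMeasure Ghat) (hsupp : Ghat (Set.Iio ℓ) = 0)
    (hD : ∀ σ : ℝ, ℓ ≤ σ →
      (∑ i, w i * (snKer μ lam (z i) σ / ∫ s, snKer μ lam (z i) s ∂Ghat)) - ∑ i, w i ≤ 0) :
    ∀ G : Measure ℝ, IsProbabilityMeasure G → G (Set.Iio ℓ) = 0 →
      ltilde w z μ lam G ≤ ltilde w z μ lam Ghat := by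
  intro G hG hGsupp
  classical
  set b : Fin N → ℝ := fun i => ∫ s, snKer μ lam (z i) s ∂Ghat with hbdef
  set a : Fin N → ℝ := fun i => ∫ σ, snKer μ lam (z i) σ ∂G with hadef
  have hai : ∀ i, 0 < a i := fun i => snKer_integral_pos μ lam (z i) ℓ hℓ G hGsupp
  have hbi : ∀ i, 0 < b i := fun i => snKer_integral_pos μ lam (z i) ℓ hℓ Ghat hsupp
  have key : ∀ i, w i * Real.log (a i) - w i * Real.log (b i) ≤ w i * (a i / b i) - w i := by
    intro i
    have hlog : Real.log (a i) - Real.log (b i) = Real.log (a i / b i) :=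
      (Real.log_div (hai i).ne' (hbi i).ne').symm
    have h2 : Real.log (a i / b i) ≤ a i / b i - 1 :=
      Real.log_le_sub_one_of_pos (div_pos (hai i) (hbi i))
    calc w i * Real.log (a i) - w i * Real.log (b i)
        = w i * (Real.log (a i) - Real.log (b i)) := by ring
      _ = w i * Real.log (a i / b i) := by rw [hlog]
      _ ≤ w i * (a i / b i - 1) := mul_le_mul_of_nonneg_left h2 (hw i)
      _ = w i * (a i / b i) - w i := by ring
  have h1 : ∑ i, (w i * Real.log (a i) - w i * Real.log (b i))
      ≤ ∑ i, (w i * (a i / b i) - w i) := Finset.sum_le_sum fun i _ => key i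
  have h2 : ∑ i, (w i * (a i / b i) - w i)
      = (∑ i, (w i / b i) * a i) - ∑ i, w i := by
    rw [Finset.sum_sub_distrib]
    congr 1
    exact Finset.sum_congr rfl fun i _ => by ring
  have hswap : ∑ i, (w i / b i) * a i
      = ∫ σ, (∑ i, (w i / b i) * snKer μ lam (z i) σ) ∂G := by
    rw [integral_finset_sum _
      (fun i _ => (snKer_integrable μ lam (z i) ℓ hℓ G hGsupp).const_mul _)]
    exact Finset.sum_congr rfl fun i _ => (integral_const_mul _ _).symm
  have hbound : ∫ σ, (∑ i, (w i / b i) * snKer μ lam (z i) σ) ∂G ≤ ∑ i, w i := by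
    have hfi : Integrable (fun σ => ∑ i, (w i / b i) * snKer μ lam (z i) σ) G :=
      integrable_finset_sum _
        (fun i _ => (snKer_integrable μ lam (z i) ℓ hℓ G hGsupp).const_mul _)
    have hle : (fun σ => ∑ i, (w i / b i) * snKer μ lam (z i) σ)
        ≤ᵐ[G] fun _ => ∑ i, w i := by
      filter_upwards [ae_le_of_Iio_null G hGsupp] with σ hσ
      have hDσ := hD σ hσ
      have heq : ∑ i, (w i / b i) * snKer μ lam (z i) σ
          = ∑ i, w i * (snKer μ lam (z i) σ / b i) :=
        Finset.sum_congr rfl fun i _ => by ring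
      simp only [heq]
      linarith
    calc ∫ σ, (∑ i, (w i / b i) * snKer μ lam (z i) σ) ∂G
        ≤ ∫ _, (∑ i, w i) ∂G := integral_mono_ae hfi (integrable_const _) hle
      _ = ∑ i, w i := by simp
  have hL : ∑ i, w i * Real.log (a i) - ∑ i, w i * Real.log (b i)
      = ∑ i, (w i * Real.log (a i) - w i * Real.log (b i)) :=
    by rw [Finset.sum_sub_distrib]
  show ∑ i, w i * Real.log (a i) ≤ ∑ i, w i * Real.log (b i)
  linarith
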